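/- Let P be a substochastic kernel on a countable set E contained in a group (𝓔, ⋆), and let u ∈ E satisfy E ⋆ u ⊆ E and p(x ⋆ u, y ⋆ u) ≥ p(x, y) for all x, y ∈ E. Define T_u f (x) = f(x ⋆ u) and A_u f (x) = Σ_y a_u(x,y) f(y), where a_u(x,y) = p(x⋆u, y) − p(x, y⋆u⁻¹) if y ∈ E⋆u and a_u(x,y) = p(x⋆u, y) otherwise. Then all coefficients a_u(x,y) are nonnegative, and for every nonnegative function φ : E → ℝ₊ one has T_u(Pφ) = P(T_u φ) + A_u φ pointwise on E. -/

import Mathlib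

open scoped ENNReal Classical BigOperators
open Filter

noncomputable section

namespace RW

variable {G : Type*}

/-- One-step transition operator `Pφ(x) = Σ_y p(x,y) φ(y)`. -/
def kapp (p : G → G → ℝ≥0∞) (φ : G → ℝ≥0∞) (x : G) : ℝ≥0∞ := ∑' y, p x y * φ y

/-- n-step transition kernel. -/
def kiter (p : G → G → ℝ≥0∞) : ℕ → G → G → ℝ≥0∞
  | 0 => fun x y => if x = y then 1 else 0
  | n + 1 => fun x y => ∑' z, p x z * kiter p n z y

/-- Green function `G(x,y) = Σ_t ℙ_x(X(t)=y)`. -/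
def green (p : G → G → ℝ≥0∞) (x y : G) : ℝ≥0∞ := ∑' n, kiter p n x y

/-- Green operator `Gφ(x) = Σ_y G(x,y) φ(y)`. -/
def greenApp (p : G → G → ℝ≥0∞) (φ : G → ℝ≥0∞) (x : G) : ℝ≥0∞ := ∑' y, green p x y * φ y

/-- Probability of first hitting `y` at time `n ≥ 1`. -/
def fhit (p : G → G → ℝ≥0∞) : ℕ → G → G → ℝ≥0∞
  | 0 => fun _ _ => 0
  | 1 => p
  | n + 2 => fun x y => ∑' z, if z = y then 0 else p x z * fhit p (n + 1) z y

/-- Hitting probability `Q(x,y) = ℙ_x(∃ t ≥ 1, X(t) = y)`. -/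
def hitProb (p : G → G → ℝ≥0∞) (x y : G) : ℝ≥0∞ := ∑' n, fhit p n x y

/-- Survival probability `ℙ_x(τ_ϑ > n)`. -/
def surv (p : G → G → ℝ≥0∞) (n : ℕ) (x : G) : ℝ≥0∞ := ∑' y, kiter p n x y

/-- Expected lifetime `𝔼_x(τ_ϑ) = Σ_n ℙ_x(τ_ϑ > n)`. -/
def gexp (p : G → G → ℝ≥0∞) (x : G) : ℝ≥0∞ := ∑' n, surv p n x

variable [Group G]

/-- Matrix coefficients `a_u(x,y)` of the operator `A_u = T_u P - P T_u`. -/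
def acoef (p : G → G → ℝ≥0∞) (E : Set G) (u x y : G) : ℝ≥0∞ :=
  if y * u⁻¹ ∈ E then p (x * u) y - p x (y * u⁻¹) else p (x * u) y

/-- The operator `A_u φ(x) = Σ_y a_u(x,y) φ(y)`. -/
def Aop (p : G → G → ℝ≥0∞) (E : Set G) (u : G) (φ : G → ℝ≥0∞) (x : G) : ℝ≥0∞ :=
  ∑' y, acoef p E u x y * φ y

/-- Ladder height transition kernel `p_H(x,y) = G A_x 𝟙_{y}(e)`. -/
def ladder (p : G → G → ℝ≥0∞) (E : Set G) (x y : G) : ℝ≥0∞ :=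
  ∑' z, green p 1 z * acoef p E x z y

/-- The renewal function `V(x) = 𝔼_x(𝒯_ϑ)` of the ladder height process. -/
def V (p : G → G → ℝ≥0∞) (E : Set G) (x : G) : ℝ≥0∞ :=
  ∑' n, surv (ladder p E) n x

end RW

end

open RW

theorem statement0 {G : Type*} [Group G] [Countable G]
    (p : G → G → ℝ≥0∞) (E : Set G)
    (hsupp : ∀ x y, p x y ≠ 0 → x ∈ E ∧ y ∈ E)
    (hsub : ∀ x, (∑' y, p x y) ≤ 1)
    (u : G) (hu : u ∈ E)
    (hEu : ∀ x ∈ E, x * u ∈ E)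
    (hmono : ∀ x ∈ E, ∀ y ∈ E, p x y ≤ p (x * u) (y * u)) :
    (∀ x y, 0 ≤ acoef p E u x y) ∧
    ∀ (φ : G → ℝ≥0∞), ∀ x ∈ E,
      kapp p φ (x * u) = kapp p (fun z => φ (z * u)) x + Aop p E u φ x := by
  refine ⟨fun x y => zero_le, fun φ x hx => ?_⟩
  have key : ∀ y, p (x * u) y * φ y
      = p x (y * u⁻¹) * φ y + acoef p E u x y * φ y := by
    intro y
    unfold acoef
    by_cases hy : y * u⁻¹ ∈ E
    · simp only [hy, if_true]
      have hle : p x (y * u⁻¹) ≤ p (x * u) y := by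
        have := hmono x hx (y * u⁻¹) hy
        simpa using this
      rw [← add_mul, add_tsub_cancel_of_le hle]
    · simp only [hy, if_false]
      have h0 : p x (y * u⁻¹) = 0 := by
        by_contra h
        exact hy (hsupp x (y * u⁻¹) h).2
      rw [h0, zero_mul, zero_add]
  unfold kapp Aop
  calc (∑' y, p (x * u) y * φ y)
      = ∑' y, (p x (y * u⁻¹) * φ y + acoef p E u x y * φ y) := by
        exact tsum_congr key
    _ = (∑' y, p x (y * u⁻¹) * φ y) + ∑' y, acoef p E u x y * φ y :=
        ENNReal.tsum_add
    _ = (∑' z, p x z * φ (z * u)) + ∑' y, acoef p E u x y * φ y := by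
        congr 1
        rw [← (Equiv.mulRight u).tsum_eq (fun y => p x (y * u⁻¹) * φ y)]
        simp [Equiv.mulRight]
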